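/- For every odd integer n ≥ 3, the Vasilyev integral V_n(0) equals the multiple series Σ_{l_1 ≥ l_2 ≥ ⋯ ≥ l_{(n−1)/2} ≥ l_{(n+1)/2} ≥ 1} 1/(l_1^2 l_2^2 ⋯ l_{(n−1)/2}^2 l_{(n+1)/2}). -/

import Mathlib

open MeasureTheory Finset
open scoped ENNReal

noncomputable section

/-- The unit cube `[0,1]^n`. -/
def cube (n : ℕ) : Set (Fin n → ℝ) := Set.univ.pi fun _ => Set.Icc (0:ℝ) 1

/-- The `k`-th coordinate (1-based indexing) of `x`. -/
def ent {n : ℕ} (x : Fin n → ℝ) (k : ℕ) : ℝ := if h : k - 1 < n then x ⟨k - 1, h⟩ else 0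

/-- `δ_k(x) = 1 - x_k δ_{k-1}(x)`, with `δ_0 = 1`. -/
def delta {n : ℕ} (x : Fin n → ℝ) : ℕ → ℝ
  | 0 => 1
  | k + 1 => 1 - ent x (k + 1) * delta x k

/-- The Vasilyev integral `V_n(N)`. -/
def Vint (n : ℕ) (N : ℕ) : ℝ≥0∞ :=
  ∫⁻ x in cube n, ENNReal.ofReal
    ((∏ k ∈ Icc 1 n, ent x k ^ N * (1 - ent x k) ^ N) / delta x n ^ (N + 1))

-- measurability
lemma measurable_ent {n : ℕ} (k : ℕ) : Measurable fun x : Fin n → ℝ => ent x k := by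
  unfold ent
  split
  · exact measurable_pi_apply _
  · exact measurable_const

lemma measurable_delta {n : ℕ} (k : ℕ) : Measurable fun x : Fin n → ℝ => delta x k := by
  induction k with
  | zero => simpa [delta] using measurable_const
  | succ k ih =>
    show Measurable fun x : Fin n → ℝ => 1 - ent x (k+1) * delta x k
    exact measurable_const.sub ((measurable_ent (k+1)).mul ih)

lemma measurableSet_cube (n : ℕ) : MeasurableSet (cube n) :=
  MeasurableSet.univ_pi fun _ => measurableSet_Icc

lemma mem_cube {n : ℕ} {x : Fin n → ℝ} (hx : x ∈ cube n) (i : Fin n) :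
    x i ∈ Set.Icc (0:ℝ) 1 := hx i (Set.mem_univ i)

lemma ent_mem {n : ℕ} {x : Fin n → ℝ} (hx : x ∈ cube n) {k : ℕ} (hk : k - 1 < n) :
    ent x k ∈ Set.Icc (0:ℝ) 1 := by
  unfold ent
  rw [dif_pos hk]
  exact mem_cube hx _

lemma delta_mem {n : ℕ} {x : Fin n → ℝ} (hx : x ∈ cube n) {k : ℕ} (hk : k ≤ n) :
    delta x k ∈ Set.Icc (0:ℝ) 1 := by
  induction k with
  | zero => simp [delta]
  | succ k ih =>
    have hk' : k ≤ n := le_of_lt hk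
    have h1 := ih hk'
    have h2 : ent x (k+1) ∈ Set.Icc (0:ℝ) 1 := ent_mem hx (by omega)
    obtain ⟨a1, a2⟩ := h1; obtain ⟨b1, b2⟩ := h2
    constructor
    · show 0 ≤ 1 - ent x (k+1) * delta x k
      nlinarith
    · show 1 - ent x (k+1) * delta x k ≤ 1
      nlinarith

lemma ent_snoc {n : ℕ} (x' : Fin n → ℝ) (y : ℝ) {k : ℕ} (hk1 : 1 ≤ k) (hk : k ≤ n) :
    ent (Fin.snoc x' y : Fin (n+1) → ℝ) k = ent x' k := by
  have h1 : k - 1 < n := by omega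
  have h2 : k - 1 < n + 1 := by omega
  unfold ent
  rw [dif_pos h2, dif_pos h1]
  have : (⟨k-1, h2⟩ : Fin (n+1)) = Fin.castSucc ⟨k-1, h1⟩ := rfl
  rw [this, Fin.snoc_castSucc]

lemma ent_snoc_last {n : ℕ} (x' : Fin n → ℝ) (y : ℝ) :
    ent (Fin.snoc x' y : Fin (n+1) → ℝ) (n+1) = y := by
  have h2 : n + 1 - 1 < n + 1 := by omega
  unfold ent
  rw [dif_pos h2]
  have : (⟨n+1-1, h2⟩ : Fin (n+1)) = Fin.last n := rfl
  rw [this, Fin.snoc_last]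

lemma delta_snoc {n : ℕ} (x' : Fin n → ℝ) (y : ℝ) {k : ℕ} (hk : k ≤ n) :
    delta (Fin.snoc x' y : Fin (n+1) → ℝ) k = delta x' k := by
  induction k with
  | zero => rfl
  | succ k ih =>
    show 1 - ent _ (k+1) * delta _ k = 1 - ent x' (k+1) * delta x' k
    rw [ent_snoc x' y (by omega) hk, ih (by omega)]


lemma peel (n : ℕ) (f : (Fin (n+1) → ℝ) → ℝ≥0∞) (hf : Measurable f) :
    ∫⁻ x in cube (n+1), f x
      = ∫⁻ x' in cube n, ∫⁻ y in Set.Icc (0:ℝ) 1, f (Fin.snoc x' y) := by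
  have mp := volume_preserving_piFinSuccAbove (fun _ : Fin (n+1) => ℝ) (Fin.last n)
  set e := MeasurableEquiv.piFinSuccAbove (fun _ : Fin (n+1) => ℝ) (Fin.last n) with he
  have hsymm : ∀ (y : ℝ) (x' : Fin n → ℝ), e.symm (y, x') = Fin.snoc x' y := by
    intro y x'
    show (MeasurableEquiv.piFinSuccAbove (fun _ : Fin (n+1) => ℝ) (Fin.last n)).symm (y, x')
      = Fin.snoc x' y
    rw [MeasurableEquiv.piFinSuccAbove_symm_apply]
    exact Fin.insertNth_last' y x'
  have hset : ∀ z : ℝ × (Fin n → ℝ), e.symm z ∈ cube (n+1) ↔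
      z ∈ (Set.Icc (0:ℝ) 1) ×ˢ cube n := by
    rintro ⟨y, x'⟩
    rw [hsymm]
    constructor
    · intro h
      refine ⟨by simpa using h (Fin.last n) (Set.mem_univ _), fun i _ => ?_⟩
      simpa using h (Fin.castSucc i) (Set.mem_univ _)
    · rintro ⟨h1, h2⟩ i _
      induction i using Fin.lastCases with
      | last => simpa using h1
      | cast j => simpa using h2 j (Set.mem_univ j)
  have hmeas : Measurable fun z : ℝ × (Fin n → ℝ) =>
      ((Set.Icc (0:ℝ) 1) ×ˢ cube n).indicator (fun z => f (e.symm z)) z :=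
    (hf.comp e.symm.measurable).indicator ((measurableSet_Icc).prod (measurableSet_cube n))
  have key : ∫⁻ x in cube (n+1), f x
      = ∫⁻ z in (Set.Icc (0:ℝ) 1) ×ˢ cube n, f (e.symm z) ∂(volume.prod volume) := by
    rw [← lintegral_indicator (measurableSet_cube (n+1)), ← Measure.volume_eq_prod,
        ← lintegral_indicator ((measurableSet_Icc).prod (measurableSet_cube n)),
        ← mp.lintegral_comp hmeas]
    apply lintegral_congr
    intro x
    by_cases hx : x ∈ cube (n+1)
    · rw [Set.indicator_of_mem hx, Set.indicator_of_mem (by rw [← hset, e.symm_apply_apply]; exact hx),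
        e.symm_apply_apply]
    · rw [Set.indicator_of_notMem hx, Set.indicator_of_notMem (by rw [← hset, e.symm_apply_apply]; exact hx)]
  rw [key, ← Measure.prod_restrict,
    lintegral_prod (fun z => f (e.symm z)) ((hf.comp e.symm.measurable).aemeasurable)]
  simp only [hsymm]
  rw [lintegral_lintegral_swap]
  have huncurry : (Function.uncurry fun y x' => f (Fin.snoc x' y))
      = fun z : ℝ × (Fin n → ℝ) => f (e.symm z) := by
    funext z
    obtain ⟨y, x'⟩ := z
    simp [Function.uncurry, hsymm]
  exact huncurry ▸ (hf.comp e.symm.measurable).aemeasurable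

lemma real_int_pow01 (m : ℕ) : ∫ y in Set.Icc (0:ℝ) 1, y ^ m = (m + 1 : ℝ)⁻¹ := by
  rw [integral_Icc_eq_integral_Ioc, ← intervalIntegral.integral_of_le (by norm_num : (0:ℝ) ≤ 1),
    integral_pow]
  norm_num

lemma ofReal_nat_inv (m : ℕ) : ENNReal.ofReal ((m + 1 : ℝ)⁻¹) = ((m:ℝ≥0∞) + 1)⁻¹ := by
  rw [ENNReal.ofReal_inv_of_pos (by positivity)]
  congr 1
  rw [show (m + 1 : ℝ) = ((m + 1 : ℕ) : ℝ) by push_cast; ring, ENNReal.ofReal_natCast]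
  push_cast; ring

lemma lintegral_pow01 (m : ℕ) :
    ∫⁻ y in Set.Icc (0:ℝ) 1, (ENNReal.ofReal y) ^ m = ((m:ℝ≥0∞) + 1)⁻¹ := by
  have h1 : ∀ᵐ y ∂(volume.restrict (Set.Icc (0:ℝ) 1)),
      (ENNReal.ofReal y) ^ m = ENNReal.ofReal (y ^ m) := by
    filter_upwards [ae_restrict_mem measurableSet_Icc] with y hy
    rw [ENNReal.ofReal_pow hy.1]
  rw [lintegral_congr_ae h1,
    ← ofReal_integral_eq_lintegral_ofReal ((continuous_pow m).integrableOn_Icc)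
      (by filter_upwards [ae_restrict_mem measurableSet_Icc] with y hy
          exact pow_nonneg hy.1 m),
    real_int_pow01, ofReal_nat_inv]
lemma L1 {t : ℝ} (ht0 : 0 ≤ t) (ht1 : t ≤ 1) :
    ∫⁻ y in Set.Icc (0:ℝ) 1, ENNReal.ofReal (1 / (1 - y * t))
      = ∑' m : ℕ, ((m:ℝ≥0∞) + 1)⁻¹ * ENNReal.ofReal (t ^ m) := by
  have hae : ∀ᵐ y ∂(volume.restrict (Set.Icc (0:ℝ) 1)),
      ENNReal.ofReal (1 / (1 - y * t)) = ∑' m : ℕ, (ENNReal.ofReal y) ^ m * ENNReal.ofReal (t ^ m) := by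
    have h1 : (volume.restrict (Set.Icc (0:ℝ) 1)) {(1:ℝ)} = 0 := by
      rw [Measure.restrict_apply (measurableSet_singleton 1)]
      exact measure_mono_null (Set.inter_subset_left) (Real.volume_singleton)
    filter_upwards [ae_restrict_mem measurableSet_Icc, measure_eq_zero_iff_ae_notMem.mp h1] with y hy hy1
    have hylt : y < 1 := lt_of_le_of_ne hy.2 (by simpa using hy1)
    have hs0 : 0 ≤ y * t := mul_nonneg hy.1 ht0
    have hs1 : y * t < 1 := lt_of_le_of_lt (mul_le_of_le_one_right hy.1 ht1) hylt
    rw [one_div, ENNReal.ofReal_inv_of_pos (by linarith),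
      ENNReal.ofReal_sub 1 hs0, ENNReal.ofReal_one, ← ENNReal.tsum_geometric]
    congr 1
    funext m
    rw [ENNReal.ofReal_mul hy.1, mul_pow, ENNReal.ofReal_pow ht0]
  have hmeas : ∀ m : ℕ, Measurable fun y : ℝ => (ENNReal.ofReal y) ^ m * ENNReal.ofReal (t ^ m) :=
    fun m => (ENNReal.measurable_ofReal.pow_const m).mul_const _
  rw [lintegral_congr_ae hae, lintegral_tsum (fun m => (hmeas m).aemeasurable)]
  congr 1
  funext m
  rw [lintegral_mul_const _ (ENNReal.measurable_ofReal.pow_const m),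
    lintegral_pow01, mul_comm]
lemma real_int2 (m : ℕ) {t : ℝ} (ht0 : 0 ≤ t) (ht1 : t ≤ 1) :
    ∫ y in Set.Icc (0:ℝ) 1, (1 - y*t)^m = (m+1:ℝ)⁻¹ * ∑ j ∈ range (m+1), (1-t)^j := by
  rcases eq_or_lt_of_le ht0 with h0 | h0
  · simp only [← h0, mul_zero, sub_zero, one_pow, Finset.sum_const, card_range, nsmul_eq_mul, mul_one]
    rw [MeasureTheory.setIntegral_const]
    simp [Real.volume_Icc]
    rw [inv_mul_cancel₀ (by positivity)]
  · have hmt : ((m:ℝ)+1) * t ≠ 0 := by positivity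
    have hderiv : ∀ y ∈ Set.uIcc (0:ℝ) 1, HasDerivAt
        (fun y => (1 - (1 - y*t)^(m+1)) / (((m:ℝ)+1)*t)) ((1 - y*t)^m) y := by
      intro y _
      have h1 : HasDerivAt (fun y : ℝ => 1 - y*t) (-t) y := by
        simpa using ((hasDerivAt_id y).mul_const t).const_sub 1
      have h2 : HasDerivAt (fun y : ℝ => (1 - y*t)^(m+1))
          ((m+1 : ℕ) * (1 - y*t)^m * (-t)) y := by
        simpa using (h1.fun_pow (m+1))
      have h3 := (h2.const_sub 1).div_const (((m:ℝ)+1)*t)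
      refine h3.congr_deriv ?_
      push_cast
      field_simp
    have hcont : IntervalIntegrable (fun y => (1 - y*t)^m) volume 0 1 :=
      ((by continuity : Continuous fun y : ℝ => (1 - y*t)^m).intervalIntegrable 0 1)
    rw [integral_Icc_eq_integral_Ioc, ← intervalIntegral.integral_of_le (by norm_num : (0:ℝ) ≤ 1),
      intervalIntegral.integral_eq_sub_of_hasDerivAt hderiv hcont]
    have hgeom : ∑ j ∈ range (m+1), (1-t)^j = ((1-t)^(m+1) - 1)/((1-t) - 1) :=
      geom_sum_eq (by intro h; apply h0.ne'; linarith) (m+1)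
    rw [hgeom]
    field_simp [h0.ne']
    ring

lemma L2 (m : ℕ) {t : ℝ} (ht0 : 0 ≤ t) (ht1 : t ≤ 1) :
    ∫⁻ y in Set.Icc (0:ℝ) 1, ENNReal.ofReal ((1 - y*t)^m)
      = ((m:ℝ≥0∞)+1)⁻¹ * ∑ j ∈ range (m+1), ENNReal.ofReal ((1-t)^j) := by
  rw [← ofReal_integral_eq_lintegral_ofReal]
  · rw [real_int2 m ht0 ht1, ENNReal.ofReal_mul (by positivity), ofReal_nat_inv,
      ENNReal.ofReal_sum_of_nonneg (fun j _ => pow_nonneg (by linarith) j)]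
  · exact ((by continuity : Continuous fun y : ℝ => (1 - y*t)^m).integrableOn_Icc)
  · filter_upwards [ae_restrict_mem measurableSet_Icc] with y hy
    have : y * t ≤ 1 := le_trans (mul_le_of_le_one_right hy.1 ht1) hy.2
    exact pow_nonneg (by linarith) m
lemma L3 (j : ℕ) {s : ℝ} (hs : 0 ≤ s) :
    ∫⁻ z in Set.Icc (0:ℝ) 1, ENNReal.ofReal ((z*s)^j)
      = ((j:ℝ≥0∞)+1)⁻¹ * ENNReal.ofReal (s^j) := by
  have hae : ∀ᵐ z ∂(volume.restrict (Set.Icc (0:ℝ) 1)),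
      ENNReal.ofReal ((z*s)^j) = (ENNReal.ofReal z)^j * ENNReal.ofReal (s^j) := by
    filter_upwards [ae_restrict_mem measurableSet_Icc] with z hz
    rw [mul_pow, ENNReal.ofReal_mul (pow_nonneg hz.1 j), ENNReal.ofReal_pow hz.1]
  rw [lintegral_congr_ae hae,
    lintegral_mul_const _ (ENNReal.measurable_ofReal.pow_const j), lintegral_pow01]


def Bq (q m : ℕ) : ℝ≥0∞ := ∫⁻ x in cube (2*q), ENNReal.ofReal (delta x (2*q) ^ m)

lemma B_zero (m : ℕ) : Bq 0 m = 1 := by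
  have hc : cube 0 = Set.univ := by
    ext x; simp [cube]
  have : ∀ x : Fin 0 → ℝ, ENNReal.ofReal (delta x (2*0) ^ m) = 1 := by
    intro x
    show ENNReal.ofReal ((1:ℝ) ^ m) = 1
    simp
  rw [Bq]
  rw [lintegral_congr this, setLIntegral_const, hc, one_mul]
  rw [MeasureTheory.volume_pi, Measure.pi_univ]
  simp


lemma measurable_of2 {n : ℕ} (k m : ℕ) :
    Measurable fun x : Fin n → ℝ => ENNReal.ofReal (delta x k ^ m) :=
  ((measurable_delta k).pow_const m).ennreal_ofReal

lemma measurable_of3 {n : ℕ} (k k' j : ℕ) :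
    Measurable fun x : Fin n → ℝ => ENNReal.ofReal ((ent x k * delta x k') ^ j) :=
  (((measurable_ent k).mul (measurable_delta k')).pow_const j).ennreal_ofReal

lemma step2 (q j : ℕ) :
    ∫⁻ x' in cube (2*q+1), ENNReal.ofReal ((ent x' (2*q+1) * delta x' (2*q)) ^ j)
      = ((j:ℝ≥0∞)+1)⁻¹ * Bq q j := by
  rw [peel (2*q) _ (measurable_of3 (2*q+1) (2*q) j)]
  have h1 : ∀ x'' : Fin (2*q) → ℝ, x'' ∈ cube (2*q) →
      (∫⁻ z in Set.Icc (0:ℝ) 1,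
        ENNReal.ofReal ((ent (Fin.snoc x'' z) (2*q+1) * delta (Fin.snoc x'' z) (2*q)) ^ j))
      = ((j:ℝ≥0∞)+1)⁻¹ * ENNReal.ofReal (delta x'' (2*q) ^ j) := by
    intro x'' hx
    have hpt : ∀ z : ℝ, ent (Fin.snoc x'' z) (2*q+1) * delta (Fin.snoc x'' z) (2*q)
        = z * delta x'' (2*q) := by
      intro z
      rw [ent_snoc_last, delta_snoc _ _ (le_refl (2*q))]
    simp only [hpt]
    exact L3 j (delta_mem hx (le_refl (2*q))).1
  rw [setLIntegral_congr_fun (measurableSet_cube (2*q)) h1,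
    lintegral_const_mul _ (measurable_of2 (2*q) j)]
  rfl

lemma B_succ (q m : ℕ) :
    Bq (q+1) m = ((m:ℝ≥0∞)+1)⁻¹ * ∑ j ∈ range (m+1), ((j:ℝ≥0∞)+1)⁻¹ * Bq q j := by
  have e1 : Bq (q+1) m = ∫⁻ x in cube (2*q+1+1), ENNReal.ofReal (delta x (2*q+1+1) ^ m) := rfl
  rw [e1, peel (2*q+1) _ (measurable_of2 (2*q+1+1) m)]
  have h1 : ∀ x' : Fin (2*q+1) → ℝ, x' ∈ cube (2*q+1) →
      (∫⁻ y in Set.Icc (0:ℝ) 1, ENNReal.ofReal (delta (Fin.snoc x' y) (2*q+1+1) ^ m))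
      = ((m:ℝ≥0∞)+1)⁻¹ *
          ∑ j ∈ range (m+1), ENNReal.ofReal ((ent x' (2*q+1) * delta x' (2*q)) ^ j) := by
    intro x' hx
    have hpt : ∀ y : ℝ, delta (Fin.snoc x' y) (2*q+1+1) = 1 - y * delta x' (2*q+1) := by
      intro y
      show 1 - ent (Fin.snoc x' y) (2*q+1+1) * delta (Fin.snoc x' y) (2*q+1)
        = 1 - y * delta x' (2*q+1)
      rw [ent_snoc_last, delta_snoc _ _ (le_refl (2*q+1))]
    simp only [hpt]
    obtain ⟨hd0, hd1⟩ := delta_mem hx (le_refl (2*q+1))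
    rw [L2 m hd0 hd1]
    congr 1
    apply Finset.sum_congr rfl
    intro j _
    congr 2
    show 1 - delta x' (2*q+1) = _
    show 1 - (1 - ent x' (2*q+1) * delta x' (2*q)) = _
    ring
  rw [setLIntegral_congr_fun (measurableSet_cube (2*q+1)) h1,
    lintegral_const_mul _ (Finset.measurable_sum _ (fun j _ => measurable_of3 (2*q+1) (2*q) j)),
    lintegral_finset_sum _ (fun j _ => measurable_of3 (2*q+1) (2*q) j)]
  congr 1
  apply Finset.sum_congr rfl
  intro j _
  exact step2 q j


lemma measurable_of1 {n : ℕ} (k : ℕ) :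
    Measurable fun x : Fin n → ℝ => ENNReal.ofReal (1 / delta x k) :=
  (measurable_const.div (measurable_delta k)).ennreal_ofReal

lemma V_eq (p : ℕ) :
    Vint (2*p+1) 0 = ∑' m : ℕ, ((m:ℝ≥0∞)+1)⁻¹ * Bq p m := by
  have e0 : Vint (2*p+1) 0
      = ∫⁻ x in cube (2*p+1), ENNReal.ofReal (1 / delta x (2*p+1)) := by
    rw [Vint]
    apply lintegral_congr
    intro x
    simp
  rw [e0, show (2*p+1 : ℕ) = (2*p)+1 from rfl, peel (2*p) _ (measurable_of1 (2*p+1))]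
  have h1 : ∀ x' : Fin (2*p) → ℝ, x' ∈ cube (2*p) →
      (∫⁻ y in Set.Icc (0:ℝ) 1, ENNReal.ofReal (1 / delta (Fin.snoc x' y) (2*p+1)))
      = ∑' m : ℕ, ((m:ℝ≥0∞)+1)⁻¹ * ENNReal.ofReal (delta x' (2*p) ^ m) := by
    intro x' hx
    have hpt : ∀ y : ℝ, delta (Fin.snoc x' y) (2*p+1) = 1 - y * delta x' (2*p) := by
      intro y
      show 1 - ent (Fin.snoc x' y) (2*p+1) * delta (Fin.snoc x' y) (2*p) = _
      rw [ent_snoc_last, delta_snoc _ _ (le_refl (2*p))]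
    simp only [hpt]
    obtain ⟨hd0, hd1⟩ := delta_mem hx (le_refl (2*p))
    exact L1 hd0 hd1
  rw [setLIntegral_congr_fun (measurableSet_cube (2*p)) h1,
    lintegral_tsum (fun m => ((measurable_of2 (2*p) m).const_mul _).aemeasurable)]
  congr 1
  funext m
  rw [lintegral_const_mul _ (measurable_of2 (2*p) m)]
  rfl


open scoped Classical

def Rq : ℕ → ℕ → ℝ≥0∞
  | 0, m => ((m:ℝ≥0∞)+1)⁻¹
  | q+1, m => ((m:ℝ≥0∞)+1)⁻¹ * (((m:ℝ≥0∞)+1)⁻¹ * ∑ j ∈ range (m+1), Rq q j)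

lemma RB (q : ℕ) : ∀ m : ℕ, ((m:ℝ≥0∞)+1)⁻¹ * Bq q m = Rq q m := by
  induction q with
  | zero => intro m; rw [B_zero, Rq, mul_one]
  | succ q ih =>
    intro m
    rw [B_succ, Rq]
    congr 1
    congr 1
    apply Finset.sum_congr rfl
    intro j _
    exact ih j

def Wq (q : ℕ) (l : Fin (q+1) → ℕ) : ℝ≥0∞ :=
  ∏ i, (1:ℝ≥0∞) / ((l i : ℝ≥0∞)) ^ (if (i:ℕ) + 1 = q + 1 then 1 else 2)

def Cond (q : ℕ) (l : Fin (q+1) → ℕ) : Prop :=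
  (∀ i j, i ≤ j → l j ≤ l i) ∧ ∀ i, 1 ≤ l i

lemma W_cons (q : ℕ) (a : ℕ) (l' : Fin (q+1) → ℕ) :
    Wq (q+1) (Fin.cons a l') = ((1:ℝ≥0∞) / (a:ℝ≥0∞)^2) * Wq q l' := by
  rw [Wq, Fin.prod_univ_succ]
  simp only [Fin.cons_zero, Fin.cons_succ]
  rw [if_neg (show ¬(((0:Fin (q+2)):ℕ) + 1 = q + 1 + 1) by simp only [Fin.val_zero]; omega)]
  congr 1
  rw [Wq]
  apply Finset.prod_congr rfl
  intro i _
  by_cases h : (i:ℕ) + 1 = q + 1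
  · rw [Fin.val_succ, if_pos (by omega), if_pos h]
  · rw [Fin.val_succ, if_neg (by omega), if_neg h]

lemma cond_cons (q : ℕ) (a : ℕ) (l' : Fin (q+1) → ℕ) :
    Cond (q+1) (Fin.cons a l') ↔ (Cond q l' ∧ l' 0 ≤ a ∧ 1 ≤ a) := by
  constructor
  · rintro ⟨hc, hp⟩
    refine ⟨⟨fun i j hij => ?_, fun i => ?_⟩, ?_, hp 0⟩
    · have := hc i.succ j.succ (by simpa [Fin.succ_le_succ_iff] using hij)
      simpa using this
    · simpa using hp i.succ
    · have := hc 0 (0 : Fin (q+1)).succ (Fin.zero_le _)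
      simpa using this
  · rintro ⟨⟨hc, hp⟩, h0, ha⟩
    constructor
    · intro i j hij
      induction i using Fin.cases with
      | zero =>
        induction j using Fin.cases with
        | zero => exact le_refl _
        | succ j' =>
          simp only [Fin.cons_zero, Fin.cons_succ]
          exact le_trans (hc 0 j' (Fin.zero_le _)) h0
      | succ i' =>
        induction j using Fin.cases with
        | zero => exact absurd hij (by simp [Fin.le_zero_iff, Fin.succ_ne_zero])
        | succ j' =>
          simp only [Fin.cons_succ]
          exact hc i' j' (by rwa [Fin.succ_le_succ_iff] at hij)
    · intro i
      induction i using Fin.cases with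
      | zero => simpa using ha
      | succ i' => simpa using hp i'

lemma key (q : ℕ) : ∀ m : ℕ, Rq q m
    = ∑' l : Fin (q+1) → ℕ, if Cond q l ∧ l 0 = m + 1 then Wq q l else 0 := by
  induction q with
  | zero =>
    intro m
    rw [← (Equiv.funUnique (Fin 1) ℕ).symm.tsum_eq]
    have hsymm : ∀ a : ℕ, (Equiv.funUnique (Fin 1) ℕ).symm a = fun _ : Fin 1 => a :=
      fun a => rfl
    simp only [hsymm]
    rw [tsum_eq_single (m+1) (fun a ha => if_neg (by rintro ⟨-, h⟩; exact ha h))]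
    rw [if_pos ⟨⟨fun i j _ => le_refl _, fun i => Nat.succ_le_succ (Nat.zero_le m)⟩, rfl⟩]
    rw [Wq, Fin.prod_univ_one, if_pos (by norm_num), pow_one, one_div]
    show ((m:ℝ≥0∞)+1)⁻¹ = _
    congr 1
    push_cast
    ring
  | succ q ih =>
    intro m
    have hterm : ∀ (a : ℕ) (l' : Fin (q+1) → ℕ),
        (if Cond (q+1) ((Fin.consEquiv (fun _ : Fin (q+2) => ℕ)) (a, l'))
            ∧ ((Fin.consEquiv (fun _ : Fin (q+2) => ℕ)) (a, l')) 0 = m + 1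
          then Wq (q+1) ((Fin.consEquiv (fun _ : Fin (q+2) => ℕ)) (a, l')) else 0)
        = if (Cond q l' ∧ l' 0 ≤ a ∧ 1 ≤ a) ∧ a = m + 1
          then ((1:ℝ≥0∞) / (a:ℝ≥0∞)^2) * Wq q l' else 0 := by
      intro a l'
      have hc : (Fin.consEquiv (fun _ : Fin (q+2) => ℕ)) (a, l') = Fin.cons a l' := rfl
      rw [hc, W_cons]
      exact if_congr (by rw [cond_cons, Fin.cons_zero]) rfl rfl
    have hterm2 : ∀ l' : Fin (q+1) → ℕ,
        (if (Cond q l' ∧ l' 0 ≤ m + 1 ∧ 1 ≤ m + 1) ∧ m + 1 = m + 1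
          then ((1:ℝ≥0∞) / ((m+1:ℕ):ℝ≥0∞)^2) * Wq q l' else 0)
        = ((1:ℝ≥0∞) / ((m+1:ℕ):ℝ≥0∞)^2) *
            ∑ j ∈ range (m+1), (if Cond q l' ∧ l' 0 = j + 1 then Wq q l' else 0) := by
      intro l'
      by_cases hcq : Cond q l'
      · have hv : 1 ≤ l' 0 := hcq.2 0
        have hsum : ∑ j ∈ range (m+1), (if Cond q l' ∧ l' 0 = j + 1 then Wq q l' else 0)
            = if l' 0 ≤ m + 1 then Wq q l' else 0 := by
          have h5 : ∀ j ∈ range (m+1), (if Cond q l' ∧ l' 0 = j + 1 then Wq q l' else 0)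
              = if j = l' 0 - 1 then Wq q l' else 0 := by
            intro j _
            refine if_congr ⟨fun h => by omega, fun h => ⟨hcq, by omega⟩⟩ rfl rfl
          rw [Finset.sum_congr rfl h5, Finset.sum_ite_eq' (range (m+1)) (l' 0 - 1)]
          exact if_congr (by rw [Finset.mem_range]; omega) rfl rfl
        rw [hsum]
        by_cases hle : l' 0 ≤ m + 1
        · rw [if_pos ⟨⟨hcq, hle, by omega⟩, rfl⟩, if_pos hle]
        · rw [if_neg (by tauto), if_neg hle, mul_zero]
      · rw [if_neg (by tauto)]
        have h6 : ∀ j ∈ range (m+1), (if Cond q l' ∧ l' 0 = j + 1 then Wq q l' else 0) = 0 :=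
          fun j _ => if_neg (by tauto)
        rw [Finset.sum_congr rfl h6, Finset.sum_const_zero, mul_zero]
    have hsc : ((1:ℝ≥0∞) / ((m+1:ℕ):ℝ≥0∞)^2) = ((m:ℝ≥0∞)+1)⁻¹ * ((m:ℝ≥0∞)+1)⁻¹ := by
      rw [one_div, pow_two, ENNReal.mul_inv (Or.inl (by simp)) (Or.inl (by simp))]
      push_cast
      ring
    calc Rq (q+1) m
        = ((m:ℝ≥0∞)+1)⁻¹ * (((m:ℝ≥0∞)+1)⁻¹ * ∑ j ∈ range (m+1), Rq q j) := by rw [Rq]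
      _ = ((1:ℝ≥0∞) / ((m+1:ℕ):ℝ≥0∞)^2) * ∑ j ∈ range (m+1),
            (∑' l' : Fin (q+1) → ℕ, if Cond q l' ∧ l' 0 = j + 1 then Wq q l' else 0) := by
          rw [hsc, mul_assoc]
          congr 1
          congr 1
          exact Finset.sum_congr rfl (fun j _ => ih j)
      _ = ((1:ℝ≥0∞) / ((m+1:ℕ):ℝ≥0∞)^2) * (∑' l' : Fin (q+1) → ℕ,
            ∑ j ∈ range (m+1), (if Cond q l' ∧ l' 0 = j + 1 then Wq q l' else 0)) := by
          rw [Summable.tsum_finsetSum (fun j _ => ENNReal.summable)]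
      _ = ∑' l' : Fin (q+1) → ℕ, ((1:ℝ≥0∞) / ((m+1:ℕ):ℝ≥0∞)^2) *
            ∑ j ∈ range (m+1), (if Cond q l' ∧ l' 0 = j + 1 then Wq q l' else 0) :=
          ENNReal.tsum_mul_left.symm
      _ = ∑' l' : Fin (q+1) → ℕ, if (Cond q l' ∧ l' 0 ≤ m + 1 ∧ 1 ≤ m + 1) ∧ m + 1 = m + 1
            then ((1:ℝ≥0∞) / ((m+1:ℕ):ℝ≥0∞)^2) * Wq q l' else 0 :=
          tsum_congr (fun l' => (hterm2 l').symm)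
      _ = ∑' a : ℕ, ∑' l' : Fin (q+1) → ℕ, if (Cond q l' ∧ l' 0 ≤ a ∧ 1 ≤ a) ∧ a = m + 1
            then ((1:ℝ≥0∞) / (a:ℝ≥0∞)^2) * Wq q l' else 0 :=
          by
          refine (tsum_eq_single (f := fun a : ℕ => ∑' l' : Fin (q+1) → ℕ,
            if (Cond q l' ∧ l' 0 ≤ a ∧ 1 ≤ a) ∧ a = m + 1
              then ((1:ℝ≥0∞) / (a:ℝ≥0∞)^2) * Wq q l' else 0) (m+1) ?_).symm
          intro a ha
          refine ENNReal.summable.tsum_eq_zero_iff.mpr (fun l' => if_neg ?_)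
          rintro ⟨-, h⟩
          exact ha h
      _ = ∑' z : ℕ × (Fin (q+1) → ℕ), if (Cond q z.2 ∧ z.2 0 ≤ z.1 ∧ 1 ≤ z.1) ∧ z.1 = m + 1
            then ((1:ℝ≥0∞) / (z.1:ℝ≥0∞)^2) * Wq q z.2 else 0 := by
          rw [ENNReal.tsum_prod']
      _ = ∑' l : Fin (q+2) → ℕ, if Cond (q+1) l ∧ l 0 = m + 1 then Wq (q+1) l else 0 := by
          rw [← (Fin.consEquiv (fun _ : Fin (q+2) => ℕ)).tsum_eq]
          exact tsum_congr (fun z => (hterm z.1 z.2).symm)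


lemma top (p : ℕ) : (∑' m : ℕ, Rq p m)
    = ∑' l : {l : Fin (p+1) → ℕ // (∀ i j, i ≤ j → l j ≤ l i) ∧ ∀ i, 1 ≤ l i}, Wq p l.1 := by
  have h1 : ∀ l : Fin (p+1) → ℕ,
      ({l : Fin (p+1) → ℕ | (∀ i j, i ≤ j → l j ≤ l i) ∧ ∀ i, 1 ≤ l i}).indicator
        (fun l => Wq p l) l = if Cond p l then Wq p l else 0 := by
    intro l
    rw [Set.indicator_apply]
    exact if_congr Iff.rfl rfl rfl
  have h2 : ∀ l : Fin (p+1) → ℕ, (if Cond p l then Wq p l else 0)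
      = ∑' m : ℕ, if Cond p l ∧ l 0 = m + 1 then Wq p l else 0 := by
    intro l
    by_cases hc : Cond p l
    · have hv : 1 ≤ l 0 := hc.2 0
      rw [if_pos hc,
        tsum_eq_single (f := fun m : ℕ => if Cond p l ∧ l 0 = m + 1 then Wq p l else 0)
          (l 0 - 1) (fun m hm => if_neg (by rintro ⟨-, h⟩; omega)),
        if_pos ⟨hc, by omega⟩]
    · rw [if_neg hc]
      refine (ENNReal.summable.tsum_eq_zero_iff.mpr (fun m => if_neg (by tauto))).symm
  calc ∑' m : ℕ, Rq p m
      = ∑' m : ℕ, ∑' l : Fin (p+1) → ℕ, if Cond p l ∧ l 0 = m + 1 then Wq p l else 0 :=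
        tsum_congr (fun m => key p m)
    _ = ∑' l : Fin (p+1) → ℕ, ∑' m : ℕ, if Cond p l ∧ l 0 = m + 1 then Wq p l else 0 :=
        ENNReal.tsum_comm
    _ = ∑' l : Fin (p+1) → ℕ, if Cond p l then Wq p l else 0 :=
        tsum_congr (fun l => (h2 l).symm)
    _ = ∑' l : Fin (p+1) → ℕ,
          ({l : Fin (p+1) → ℕ | (∀ i j, i ≤ j → l j ≤ l i) ∧ ∀ i, 1 ≤ l i}).indicator
            (fun l => Wq p l) l :=
        tsum_congr (fun l => (h1 l).symm)
    _ = ∑' l : {l : Fin (p+1) → ℕ // (∀ i j, i ≤ j → l j ≤ l i) ∧ ∀ i, 1 ≤ l i}, Wq p l.1 :=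
        (tsum_subtype {l : Fin (p+1) → ℕ | (∀ i j, i ≤ j → l j ≤ l i) ∧ ∀ i, 1 ≤ l i}
          (fun l => Wq p l)).symm


theorem stmt6 (n : ℕ) (hn : 3 ≤ n) (hodd : Odd n) :
    Vint n 0 =
      ∑' l : {l : Fin ((n + 1) / 2) → ℕ // (∀ i j, i ≤ j → l j ≤ l i) ∧ ∀ i, 1 ≤ l i},
        ∏ i, (1 : ℝ≥0∞) / ((l.1 i : ℝ≥0∞)) ^ (if (i : ℕ) + 1 = (n + 1) / 2 then 1 else 2) := by
  obtain ⟨k, hk⟩ := hodd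
  have hn' : n = 2 * k + 1 := by omega
  subst hn'
  have hdiv : (2 * k + 1 + 1) / 2 = k + 1 := by omega
  rw [hdiv, V_eq k]
  calc (∑' m : ℕ, ((m:ℝ≥0∞)+1)⁻¹ * Bq k m)
      = ∑' m : ℕ, Rq k m := tsum_congr (fun m => RB k m)
    _ = ∑' l : {l : Fin (k+1) → ℕ // (∀ i j, i ≤ j → l j ≤ l i) ∧ ∀ i, 1 ≤ l i}, Wq k l.1 :=
        top k
    _ = _ := tsum_congr (fun l => rfl)


end
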